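/- Define ψ(x, μ) := x·exp(μ·√(2·ln(1+x))) for x, μ ∈ [0, ∞). Then: (a) for each fixed x ≥ 0, the map μ ↦ ψ(x, μ) is nondecreasing on [0, ∞), and strictly increasing when x > 0; (b) for each fixed μ > 0, the map x ↦ ψ(x, μ) is positive on (0, ∞), strictly increasing on [0, ∞), and strictly convex on [0, ∞). -/

import Mathlib

/-- `ψ(x, μ) = x·exp(μ·√(2·ln(1+x)))`. -/
noncomputable def psi (x μ : ℝ) : ℝ := x * Real.exp (μ * Real.sqrt (2 * Real.log (1 + x)))

noncomputable def psiD (μ x : ℝ) : ℝ :=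
  Real.exp (μ * Real.sqrt (2 * Real.log (1 + x))) *
    (1 + x * μ / ((1 + x) * Real.sqrt (2 * Real.log (1 + x))))

lemma sqrt_log_pos {x : ℝ} (hx : 0 < x) : 0 < Real.sqrt (2 * Real.log (1 + x)) := by
  apply Real.sqrt_pos.2
  have := Real.log_pos (show (1:ℝ) < 1 + x by linarith)
  linarith

lemma hasDerivAt_g {x : ℝ} (hx : 0 < x) :
    HasDerivAt (fun y => Real.sqrt (2 * Real.log (1 + y)))
      (1 / ((1 + x) * Real.sqrt (2 * Real.log (1 + x)))) x := by
  have hlog : HasDerivAt (fun y : ℝ => Real.log (1 + y)) (1 / (1 + x)) x := by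
    have h := ((hasDerivAt_id x).const_add 1).log (show (1:ℝ) + x ≠ 0 by positivity)
    simpa using h
  have h1 : HasDerivAt (fun y : ℝ => 2 * Real.log (1 + y)) (2 * (1 / (1 + x))) x :=
    hlog.const_mul 2
  have hLpos := Real.log_pos (show (1:ℝ) < 1 + x by linarith)
  have h2 := h1.sqrt (show 2 * Real.log (1 + x) ≠ 0 by positivity)
  convert h2 using 1
  have hs := sqrt_log_pos hx
  have h1x : (0:ℝ) < 1 + x := by linarith
  field_simp

lemma hasDerivAt_psi (μ : ℝ) {x : ℝ} (hx : 0 < x) :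
    HasDerivAt (fun y => psi y μ) (psiD μ x) x := by
  have hg := hasDerivAt_g hx
  have hE : HasDerivAt (fun y => Real.exp (μ * Real.sqrt (2 * Real.log (1 + y))))
      (Real.exp (μ * Real.sqrt (2 * Real.log (1 + x))) *
        (μ * (1 / ((1 + x) * Real.sqrt (2 * Real.log (1 + x)))))) x := (hg.const_mul μ).exp
  have h := (hasDerivAt_id x).mul hE
  have : HasDerivAt (fun y => psi y μ)
      (1 * Real.exp (μ * Real.sqrt (2 * Real.log (1 + x))) +
        x * (Real.exp (μ * Real.sqrt (2 * Real.log (1 + x))) *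
        (μ * (1 / ((1 + x) * Real.sqrt (2 * Real.log (1 + x))))))) x := by
    exact h
  convert this using 1
  have hs := sqrt_log_pos hx
  have h1x : (0:ℝ) < 1 + x := by linarith
  unfold psiD
  field_simp

lemma hasDerivAt_psiD (μ : ℝ) {x : ℝ} (hx : 0 < x) :
    HasDerivAt (psiD μ)
      (μ * Real.exp (μ * Real.sqrt (2 * Real.log (1 + x))) *
        (2 * Real.log (1 + x) * (2 + x) + μ * x * Real.sqrt (2 * Real.log (1 + x)) - x) /
        ((1 + x) ^ 2 * Real.sqrt (2 * Real.log (1 + x)) ^ 3)) x := by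
  have hg := hasDerivAt_g hx
  have hs := sqrt_log_pos hx
  have h1x : (0:ℝ) < 1 + x := by linarith
  have hE : HasDerivAt (fun y => Real.exp (μ * Real.sqrt (2 * Real.log (1 + y))))
      (Real.exp (μ * Real.sqrt (2 * Real.log (1 + x))) *
        (μ * (1 / ((1 + x) * Real.sqrt (2 * Real.log (1 + x)))))) x := (hg.const_mul μ).exp
  -- derivative of the rational part
  have hn : HasDerivAt (fun y : ℝ => y * μ) μ x := by
    simpa using (hasDerivAt_id x).mul_const μ
  have hd : HasDerivAt (fun y : ℝ => (1 + y) * Real.sqrt (2 * Real.log (1 + y)))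
      (1 * Real.sqrt (2 * Real.log (1 + x)) +
        (1 + x) * (1 / ((1 + x) * Real.sqrt (2 * Real.log (1 + x))))) x :=
    ((hasDerivAt_id x).const_add 1).mul hg
  have hdne : (1 + x) * Real.sqrt (2 * Real.log (1 + x)) ≠ 0 := by positivity
  have hh := hn.div hd hdne
  have hsum := hh.const_add (1 : ℝ)
  have h := hE.mul hsum
  unfold psiD
  refine h.congr_deriv ?_
  simp only [Pi.div_apply]
  have hLpos := Real.log_pos (show (1:ℝ) < 1 + x by linarith)
  have hs2 : Real.sqrt (2 * Real.log (1 + x)) ^ 2 = 2 * Real.log (1 + x) :=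
    Real.sq_sqrt (by linarith)
  set s := Real.sqrt (2 * Real.log (1 + x)) with hsdef
  rw [← hs2]
  have hsne : s ≠ 0 := hs.ne'
  have h1ne : (1 : ℝ) + x ≠ 0 := h1x.ne'
  field_simp
  ring

lemma bracket_pos {μ x : ℝ} (hμ : 0 ≤ μ) (hx : 0 < x) :
    0 < 2 * Real.log (1 + x) * (2 + x) + μ * x * Real.sqrt (2 * Real.log (1 + x)) - x := by
  have h1x : (0:ℝ) < 1 + x := by linarith
  have hlog : Real.log ((1 + x)⁻¹) ≤ (1 + x)⁻¹ - 1 :=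
    Real.log_le_sub_one_of_pos (by positivity)
  rw [Real.log_inv] at hlog
  have hL : x ≤ Real.log (1 + x) * (1 + x) := by
    have h2 : 1 - (1 + x)⁻¹ ≤ Real.log (1 + x) := by linarith
    have h3 : (1 - (1 + x)⁻¹) * (1 + x) ≤ Real.log (1 + x) * (1 + x) :=
      mul_le_mul_of_nonneg_right h2 (le_of_lt h1x)
    calc x = (1 - (1 + x)⁻¹) * (1 + x) := by field_simp; ring
    _ ≤ _ := h3
  have hLpos := Real.log_pos (show (1:ℝ) < 1 + x by linarith)
  have hms : 0 ≤ μ * x * Real.sqrt (2 * Real.log (1 + x)) := by positivity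
  nlinarith [hL, hLpos, hx, hms]

theorem stmt_4 :
    (∀ x : ℝ, 0 ≤ x → MonotoneOn (fun μ => psi x μ) (Set.Ici 0)) ∧
    (∀ x : ℝ, 0 < x → StrictMonoOn (fun μ => psi x μ) (Set.Ici 0)) ∧
    (∀ μ : ℝ, 0 < μ →
      (∀ x : ℝ, 0 < x → 0 < psi x μ) ∧
      StrictMonoOn (fun x => psi x μ) (Set.Ici 0) ∧
      StrictConvexOn ℝ (Set.Ici 0) (fun x => psi x μ)) := by
  refine ⟨?_, ?_, ?_⟩
  · -- monotone in μ
    intro x hx μ₁ _ μ₂ _ h12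
    unfold psi
    have : μ₁ * Real.sqrt (2 * Real.log (1 + x)) ≤ μ₂ * Real.sqrt (2 * Real.log (1 + x)) :=
      mul_le_mul_of_nonneg_right h12 (Real.sqrt_nonneg _)
    exact mul_le_mul_of_nonneg_left (Real.exp_le_exp.2 this) hx
  · -- strictly monotone in μ when x > 0
    intro x hx μ₁ _ μ₂ _ h12
    unfold psi
    have hs := sqrt_log_pos hx
    have : μ₁ * Real.sqrt (2 * Real.log (1 + x)) < μ₂ * Real.sqrt (2 * Real.log (1 + x)) :=
      mul_lt_mul_of_pos_right h12 hs
    exact mul_lt_mul_of_pos_left (Real.exp_lt_exp.2 this) hx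
  · intro μ hμ
    refine ⟨?_, ?_, ?_⟩
    · intro x hx
      unfold psi
      positivity
    · -- strictly monotone in x
      intro a ha b hb hab
      simp only
      unfold psi
      have hE : Real.exp (μ * Real.sqrt (2 * Real.log (1 + a))) ≤
          Real.exp (μ * Real.sqrt (2 * Real.log (1 + b))) := by
        apply Real.exp_le_exp.2
        apply mul_le_mul_of_nonneg_left _ hμ.le
        apply Real.sqrt_le_sqrt
        have : Real.log (1 + a) ≤ Real.log (1 + b) := by
          apply Real.log_le_log (by simp only [Set.mem_Ici] at ha; linarith)
          linarith
        linarith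
      calc a * Real.exp (μ * Real.sqrt (2 * Real.log (1 + a)))
          ≤ a * Real.exp (μ * Real.sqrt (2 * Real.log (1 + b))) :=
            mul_le_mul_of_nonneg_left hE ha
        _ < b * Real.exp (μ * Real.sqrt (2 * Real.log (1 + b))) :=
            mul_lt_mul_of_pos_right hab (Real.exp_pos _)
    · -- strict convexity
      apply strictConvexOn_of_deriv2_pos (convex_Ici 0)
      · -- continuity
        unfold psi
        apply ContinuousOn.mul continuousOn_id
        apply Real.continuous_exp.comp_continuousOn
        apply ContinuousOn.mul continuousOn_const
        apply Real.continuous_sqrt.comp_continuousOn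
        apply ContinuousOn.mul continuousOn_const
        apply ContinuousOn.log (by fun_prop)
        intro x hx
        simp only [Set.mem_Ici] at hx
        positivity
      · intro x hx
        rw [interior_Ici] at hx
        have hx' : 0 < x := hx
        have hEq : deriv (fun z => psi z μ) =ᶠ[nhds x] psiD μ :=
          Filter.eventuallyEq_of_mem (isOpen_Ioi.mem_nhds hx')
            (fun y hy => (hasDerivAt_psi μ hy).deriv)
        have h2 : (deriv^[2] fun z => psi z μ) x = deriv (deriv (fun z => psi z μ)) x := rfl
        rw [h2, hEq.deriv_eq, (hasDerivAt_psiD μ hx').deriv]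
        have hs := sqrt_log_pos hx'
        have h1x : (0:ℝ) < 1 + x := by linarith
        apply div_pos
        · exact mul_pos (mul_pos hμ (Real.exp_pos _)) (bracket_pos hμ.le hx')
        · positivity
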